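/- Let S and T be finite multisets of integers all of whose elements lie in {1, 2, 3, 4}. If the products ∏_{ℓ ∈ S} (1 + (10 − ℓ)·X² + X⁴) and ∏_{ℓ ∈ T} (1 + (10 − ℓ)·X² + X⁴) are equal in ℤ[X], then S = T as multisets. -/
import Mathlib


open Polynomial

lemma aux_factorizations :
    (11:ℕ).factorization = Finsupp.single 11 1 ∧
    (10:ℕ).factorization = Finsupp.single 2 1 + Finsupp.single 5 1 ∧
    (9:ℕ).factorization = Finsupp.single 3 2 ∧
    (8:ℕ).factorization = Finsupp.single 2 3 := by
  refine ⟨?_, ?_, ?_, ?_⟩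
  · exact Nat.Prime.factorization (by norm_num)
  · rw [show (10:ℕ) = 2*5 from rfl, Nat.factorization_mul (by norm_num) (by norm_num)]
    rw [Nat.Prime.factorization (by norm_num), Nat.Prime.factorization (by norm_num)]
  · rw [show (9:ℕ) = 3^2 from rfl, Nat.Prime.factorization_pow (by norm_num)]
  · rw [show (8:ℕ) = 2^3 from rfl, Nat.Prime.factorization_pow (by norm_num)]

lemma aux_expinj (a b c d a' b' c' d' : ℕ)
    (h : 11^a*10^b*9^c*8^d = 11^a'*10^b'*9^c'*8^d') :
    a = a' ∧ b = b' ∧ c = c' ∧ d = d' := by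
  obtain ⟨f11, f10, f9, f8⟩ := aux_factorizations
  have e : ∀ x y z w : ℕ, ((11:ℕ)^x*10^y*9^z*8^w).factorization
      = x • (11:ℕ).factorization + y • (10:ℕ).factorization
        + z • (9:ℕ).factorization + w • (8:ℕ).factorization := by
    intro x y z w
    rw [Nat.factorization_mul (by positivity) (by positivity),
        Nat.factorization_mul (by positivity) (by positivity),
        Nat.factorization_mul (by positivity) (by positivity),
        Nat.factorization_pow, Nat.factorization_pow,
        Nat.factorization_pow, Nat.factorization_pow]
  have hf := congrArg Nat.factorization h
  rw [e, e, f11, f10, f9, f8] at hf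
  have h11 := DFunLike.congr_fun hf 11
  have h5 := DFunLike.congr_fun hf 5
  have h3 := DFunLike.congr_fun hf 3
  have h2 := DFunLike.congr_fun hf 2
  simp [Finsupp.single_apply] at h11 h5 h3 h2
  omega

lemma aux_prodval (S : Multiset ℤ) (hS : ∀ ℓ ∈ S, 1 ≤ ℓ ∧ ℓ ≤ 4) :
    (S.map (fun ℓ => 12 - ℓ)).prod
      = 11 ^ (S.count 1) * 10 ^ (S.count 2) * 9 ^ (S.count 3) * 8 ^ (S.count 4) := by
  induction S using Multiset.induction with
  | empty => simp
  | cons a s ih =>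
    obtain ⟨ha1, ha4⟩ := hS a (Multiset.mem_cons_self a s)
    have hs : ∀ ℓ ∈ s, 1 ≤ ℓ ∧ ℓ ≤ 4 := fun ℓ hl => hS ℓ (Multiset.mem_cons_of_mem hl)
    rw [Multiset.map_cons, Multiset.prod_cons, ih hs]
    interval_cases a <;> simp [Multiset.count_cons] <;> ring

theorem poincare_products_determine_multiset
    (S T : Multiset ℤ)
    (hS : ∀ ℓ ∈ S, 1 ≤ ℓ ∧ ℓ ≤ 4)
    (hT : ∀ ℓ ∈ T, 1 ≤ ℓ ∧ ℓ ≤ 4)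
    (h : (S.map (fun ℓ => (1 : ℤ[X]) + C (10 - ℓ) * X ^ 2 + X ^ 4)).prod
       = (T.map (fun ℓ => (1 : ℤ[X]) + C (10 - ℓ) * X ^ 2 + X ^ 4)).prod) :
    S = T := by
  have h1 := congrArg (eval (1:ℤ)) h
  rw [eval_multiset_prod, eval_multiset_prod, Multiset.map_map, Multiset.map_map] at h1
  have e : ((eval (1:ℤ)) ∘ (fun ℓ : ℤ => (1 : ℤ[X]) + C (10 - ℓ) * X ^ 2 + X ^ 4))
      = fun ℓ : ℤ => 12 - ℓ := by
    funext ℓ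
    simp
    ring
  rw [e] at h1
  rw [aux_prodval S hS, aux_prodval T hT] at h1
  have h2 : (11:ℕ)^(S.count 1)*10^(S.count 2)*9^(S.count 3)*8^(S.count 4)
      = 11^(T.count 1)*10^(T.count 2)*9^(T.count 3)*8^(T.count 4) := by
    have := h1
    exact_mod_cast (by push_cast; exact h1 :
      ((11^(S.count 1)*10^(S.count 2)*9^(S.count 3)*8^(S.count 4) : ℕ) : ℤ)
      = ((11^(T.count 1)*10^(T.count 2)*9^(T.count 3)*8^(T.count 4) : ℕ) : ℤ))
  obtain ⟨hc1, hc2, hc3, hc4⟩ := aux_expinj _ _ _ _ _ _ _ _ h2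
  ext n
  by_cases hn : 1 ≤ n ∧ n ≤ 4
  · obtain ⟨hn1, hn4⟩ := hn
    interval_cases n
    · exact hc1
    · exact hc2
    · exact hc3
    · exact hc4
  · rw [Multiset.count_eq_zero_of_notMem (fun hm => hn (hS n hm)),
        Multiset.count_eq_zero_of_notMem (fun hm => hn (hT n hm))]
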